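/- (Color ignorance) Fix b₁, b₂ ∈ [0,1], 1 ≤ m ≤ n, and 𝔦, 𝔧, 𝔨, 𝔩 ∈ {0,1}^m. For all i, j ∈ {0,1}ⁿ whose first m coordinates equal 𝔦 and 𝔧 respectively, one has Σ Lⁿ(i,j;k,l) = Lᵐ(𝔦,𝔧;𝔨,𝔩), where the sum ranges over all k, l ∈ {0,1}ⁿ whose first m coordinates equal 𝔨 and 𝔩 respectively. -/

import Mathlib

/-- Exponents of the indeterminates `b₁` (resp. `b₂`) appearing in a formal weight:
`e` for exponent zero (factor `1`), `pl` for the factor `bᵢ`, `mi` for the factor `1 - bᵢ`. -/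
inductive Eps : Type
  | e : Eps
  | pl : Eps
  | mi : Eps
deriving DecidableEq

instance : Fintype Eps :=
  ⟨{.e, .pl, .mi}, by intro x; cases x <;> simp⟩

/-- The 10-element set of formal weights: `none` represents `0`, and `some (ε₁, ε₂)`
represents the monomial `f₁(ε₁) f₂(ε₂)`. -/
abbrev Wt : Type := Option (Eps × Eps)

/-- The join operation on exponents: `a ∨ a = a`, `e ∨ a = a ∨ e = a`, and the
clash `{+, −}` gives `none` (i.e. the factor `0`). -/
def Eps.vee : Eps → Eps → Option Eps
  | .e, a => some a
  | a, .e => some a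
  | .pl, .pl => some .pl
  | .mi, .mi => some .mi
  | .pl, .mi => none
  | .mi, .pl => none

/-- The Boolean-type product `*` on the formal weight set `Wt`. -/
def wmul : Wt → Wt → Wt
  | none, _ => none
  | _, none => none
  | some (a₁, a₂), some (c₁, c₂) =>
    match a₁.vee c₁, a₂.vee c₂ with
    | some x, some y => some (x, y)
    | _, _ => none

/-- Evaluation of an exponent of `b₁`: `f₁(e) = 1`, `f₁(+) = b₁`, `f₁(−) = 1 - b₁`. -/
def f1 (b1 : ℝ) : Eps → ℝ
  | .e => 1
  | .pl => b1
  | .mi => 1 - b1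

/-- Evaluation of an exponent of `b₂`: `f₂(e) = 1`, `f₂(+) = b₂`, `f₂(−) = 1 - b₂`. -/
def f2 (b2 : ℝ) : Eps → ℝ
  | .e => 1
  | .pl => b2
  | .mi => 1 - b2

/-- The evaluation map `ev_{b₁,b₂} : W → ℝ`. -/
def ev (b1 b2 : ℝ) : Wt → ℝ
  | none => 0
  | some (x, y) => f1 b1 x * f2 b2 y

/-- The formal one-colored vertex weights `L̂¹(i, j; k, l) ∈ W`
(`i` = bottom input, `j` = left input, `k` = top output, `l` = right output,
with `true` standing for `1`). -/
def Lhat1 : Bool → Bool → Bool → Bool → Wt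
  | true, false, true, false => some (.e, .e)
  | false, true, false, true => some (.e, .e)
  | false, false, false, false => some (.e, .pl)
  | false, false, true, true => some (.e, .mi)
  | true, true, true, true => some (.pl, .e)
  | true, true, false, false => some (.mi, .e)
  | _, _, _, _ => none

/-- The `r`-fold projection `s_r(x) = (x₁ + ⋯ + x_r) mod 2` of a vector `x ∈ {0,1}ⁿ`
(here `r : Fin n` stands for the `1`-indexed level `r + 1`). -/
def sproj {n : ℕ} (x : Fin n → Bool) (r : Fin n) : Bool :=
  decide ((∑ t ∈ Finset.univ.filter (fun t : Fin n => t ≤ r),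
    (if x t then (1 : ℕ) else 0)) % 2 = 1)

/-- The formal `n`-colored vertex weight
`L̂ⁿ(i, j; k, l) = ∏*_{r=1}^n L̂¹(s_r(i), s_r(j); s_r(k), s_r(l)) ∈ W`,
where the product is taken with respect to the Boolean-type product `*`. -/
def Lhatn {n : ℕ} (i j k l : Fin n → Bool) : Wt :=
  (List.ofFn (fun r : Fin n =>
    Lhat1 (sproj i r) (sproj j r) (sproj k r) (sproj l r))).foldr wmul (some (.e, .e))

/-- The real `n`-colored vertex weight `Lⁿ(i, j; k, l) = ev_{b₁,b₂}(L̂ⁿ(i, j; k, l))`. -/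
def Ln (b1 b2 : ℝ) {n : ℕ} (i j k l : Fin n → Bool) : ℝ :=
  ev b1 b2 (Lhatn i j k l)


-- Auxiliary lemmas

lemma wmul_assoc : ∀ u v w : Wt, wmul (wmul u v) w = wmul u (wmul v w) := by decide

lemma wmul_one : ∀ u : Wt, wmul u (some (.e, .e)) = u := by decide

lemma one_wmul : ∀ u : Wt, wmul (some (.e, .e)) u = u := by decide

lemma foldr_wmul (L : List Wt) (x : Wt) :
    L.foldr wmul x = wmul (L.foldr wmul (some (.e, .e))) x := by
  induction L with
  | nil => simp [List.foldr, one_wmul]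
  | cons a L ih => simp [List.foldr, ih, wmul_assoc]

set_option maxHeartbeats 1000000 in
lemma key_sum (b1 b2 : ℝ) (P : Wt) (a b : Bool) :
    ∑ c : Bool, ∑ d : Bool, ev b1 b2 (wmul P (Lhat1 a b c d)) = ev b1 b2 P := by
  rcases P with _ | ⟨x, y⟩
  · simp [wmul, ev]
  · cases a <;> cases b <;> cases x <;> cases y <;>
      simp [Fintype.sum_bool, wmul, ev, Lhat1, f1, f2, Eps.vee] <;> ring

lemma sum_bool_xor2 (s s' : Bool) (h : Bool → Bool → ℝ) :
    ∑ c : Bool, ∑ d : Bool, h (xor s c) (xor s' d) = ∑ c : Bool, ∑ d : Bool, h c d := by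
  cases s <;> cases s' <;> simp [Fintype.sum_bool] <;> ring

lemma filter_le_castSucc {n : ℕ} (r : Fin n) :
    (Finset.univ.filter (fun t : Fin (n + 1) => t ≤ r.castSucc)) =
      (Finset.univ.filter (fun t : Fin n => t ≤ r)).map
        ⟨Fin.castSucc, Fin.castSucc_injective n⟩ := by
  ext t
  simp only [Finset.mem_filter, Finset.mem_map, Finset.mem_univ, true_and,
    Function.Embedding.coeFn_mk]
  constructor
  · intro ht
    have hv : (t : ℕ) ≤ (r : ℕ) := ht
    exact ⟨⟨t.val, lt_of_le_of_lt hv r.is_lt⟩, hv, Fin.ext rfl⟩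
  · rintro ⟨s, hs, rfl⟩
    exact hs

lemma sproj_castSucc {n : ℕ} (x : Fin (n + 1) → Bool) (r : Fin n) :
    sproj x r.castSucc = sproj (fun t => x t.castSucc) r := by
  unfold sproj
  rw [filter_le_castSucc, Finset.sum_map]
  rfl

lemma decide_succ_mod_two (A : ℕ) : decide ((A + 1) % 2 = 1) = !decide (A % 2 = 1) := by
  rcases Nat.mod_two_eq_zero_or_one A with h | h <;> simp [Nat.add_mod, h]

lemma sproj_last {n : ℕ} (x : Fin n → Bool) (c : Bool) :
    sproj (Fin.snoc x c) (Fin.last n) =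
      xor (decide ((∑ t : Fin n, (if x t then (1 : ℕ) else 0)) % 2 = 1)) c := by
  unfold sproj
  have hfil : (Finset.univ.filter (fun t : Fin (n + 1) => t ≤ Fin.last n)) = Finset.univ := by
    apply Finset.filter_true_of_mem
    intro t _
    exact Fin.le_last t
  rw [hfil, Fin.sum_univ_castSucc]
  simp only [Fin.snoc_castSucc, Fin.snoc_last]
  cases c with
  | false => simp
  | true =>
    simp [decide_succ_mod_two]

lemma Lhatn_snoc {n : ℕ} (i j : Fin (n + 1) → Bool) (k l : Fin n → Bool) (c d : Bool) :
    Lhatn i j (Fin.snoc k c) (Fin.snoc l d) =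
      wmul (Lhatn (fun t => i t.castSucc) (fun t => j t.castSucc) k l)
        (Lhat1 (sproj i (Fin.last n)) (sproj j (Fin.last n))
          (sproj (Fin.snoc k c) (Fin.last n)) (sproj (Fin.snoc l d) (Fin.last n))) := by
  unfold Lhatn
  rw [List.ofFn_succ', List.concat_eq_append, List.foldr_append]
  simp only [List.foldr_cons, List.foldr_nil, wmul_one]
  rw [foldr_wmul]
  have h1 : ∀ r : Fin n, Lhat1 (sproj i r.castSucc) (sproj j r.castSucc)
      (sproj (Fin.snoc k c) r.castSucc) (sproj (Fin.snoc l d) r.castSucc)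
    = Lhat1 (sproj (fun t => i t.castSucc) r) (sproj (fun t => j t.castSucc) r)
        (sproj k r) (sproj l r) := by
    intro r
    rw [sproj_castSucc i r, sproj_castSucc j r, sproj_castSucc (Fin.snoc k c) r,
      sproj_castSucc (Fin.snoc l d) r]
    simp [Fin.snoc_castSucc]
  simp only [h1]

lemma Ln_snoc_sum (b1 b2 : ℝ) {n : ℕ} (i j : Fin (n + 1) → Bool) (k l : Fin n → Bool) :
    ∑ c : Bool, ∑ d : Bool, Ln b1 b2 i j (Fin.snoc k c) (Fin.snoc l d)
      = Ln b1 b2 (fun t => i t.castSucc) (fun t => j t.castSucc) k l := by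
  unfold Ln
  simp only [Lhatn_snoc, sproj_last]
  exact (sum_bool_xor2 _ _ fun c d => ev b1 b2
    (wmul (Lhatn (fun t => i t.castSucc) (fun t => j t.castSucc) k l)
      (Lhat1 (sproj i (Fin.last n)) (sproj j (Fin.last n)) c d))).trans
    (key_sum b1 b2 _ _ _)

/-- `Fin.snoc` as an equivalence, with the initial tuple first. -/
def snocE (n : ℕ) : (Fin n → Bool) × Bool ≃ (Fin (n + 1) → Bool) where
  toFun p := Fin.snoc p.1 p.2
  invFun f := (Fin.init f, f (Fin.last n))
  left_inv p := by simp [Fin.init_snoc, Fin.snoc_last]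
  right_inv f := by simp [Fin.snoc_init_self]

lemma sum_snoc_filter {m n : ℕ} (hmn : m ≤ n) (h : m ≤ n + 1) (g : Fin m → Bool)
    (F : (Fin (n + 1) → Bool) → ℝ) :
    ∑ k ∈ Finset.univ.filter
        (fun k : Fin (n + 1) → Bool => ∀ r : Fin m, k (Fin.castLE h r) = g r), F k
      = ∑ k ∈ Finset.univ.filter
          (fun k : Fin n → Bool => ∀ r : Fin m, k (Fin.castLE hmn r) = g r),
          ∑ c : Bool, F (Fin.snoc k c) := by
  have hc : ∀ (k' : Fin n → Bool) (c : Bool),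
      (∀ r : Fin m, (Fin.snoc k' c : Fin (n + 1) → Bool) (Fin.castLE h r) = g r) ↔
        (∀ r : Fin m, k' (Fin.castLE hmn r) = g r) := by
    intro k' c
    have hcast : ∀ r : Fin m, (Fin.castLE h r) = Fin.castSucc (Fin.castLE hmn r) :=
      fun r => Fin.ext rfl
    constructor
    · intro hh r
      have := hh r
      rwa [hcast r, Fin.snoc_castSucc] at this
    · intro hh r
      rw [hcast r, Fin.snoc_castSucc]
      exact hh r
  rw [Finset.sum_filter, Finset.sum_filter]
  rw [← Equiv.sum_comp (snocE n)
    (fun k => if ∀ r : Fin m, k (Fin.castLE h r) = g r then F k else 0)]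
  rw [Fintype.sum_prod_type]
  apply Finset.sum_congr rfl
  intro k' _
  simp only [snocE, Equiv.coe_fn_mk]
  have : ∀ c : Bool,
      (if ∀ r : Fin m, (Fin.snoc k' c : Fin (n + 1) → Bool) (Fin.castLE h r) = g r
        then F (Fin.snoc k' c) else 0)
      = (if ∀ r : Fin m, k' (Fin.castLE hmn r) = g r then F (Fin.snoc k' c) else 0) := by
    intro c
    simp only [hc k' c]
  refine (Finset.sum_congr rfl fun c _ => this c).trans ?_
  split_ifs with hk
  · rfl
  · simp

/-- Color ignorance: for `1 ≤ m ≤ n`, summing `Lⁿ(i, j; k, l)` over all outputs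
`k, l ∈ {0,1}ⁿ` whose first `m` coordinates agree with prescribed `𝔨, 𝔩 ∈ {0,1}ᵐ`
recovers `Lᵐ(𝔦, 𝔧; 𝔨, 𝔩)`, whenever the first `m` coordinates of `i, j` equal `𝔦, 𝔧`. -/
theorem Ln_color_ignorance
    (b1 b2 : ℝ) (hb1 : b1 ∈ Set.Icc (0 : ℝ) 1) (hb2 : b2 ∈ Set.Icc (0 : ℝ) 1)
    (m n : ℕ) (hm : 1 ≤ m) (hmn : m ≤ n)
    (fi fj fk fl : Fin m → Bool)
    (i j : Fin n → Bool)
    (hi : ∀ r : Fin m, i (Fin.castLE hmn r) = fi r)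
    (hj : ∀ r : Fin m, j (Fin.castLE hmn r) = fj r) :
    ∑ k ∈ Finset.univ.filter (fun k : Fin n → Bool => ∀ r : Fin m, k (Fin.castLE hmn r) = fk r),
      ∑ l ∈ Finset.univ.filter (fun l : Fin n → Bool => ∀ r : Fin m, l (Fin.castLE hmn r) = fl r),
        Ln b1 b2 i j k l = Ln b1 b2 fi fj fk fl := by
  clear hb1 hb2 hm
  induction n, hmn using Nat.le_induction with
  | base =>
    have hcast : ∀ (h : m ≤ m) (r : Fin m), Fin.castLE h r = r := fun _ _ => Fin.ext rfl
    have hfil : ∀ g : Fin m → Bool,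
        (Finset.univ.filter (fun k : Fin m → Bool =>
          ∀ r : Fin m, k (Fin.castLE (le_refl m) r) = g r)) = {g} := by
      intro g
      ext k
      simp [hcast, funext_iff]
    rw [hfil fk, hfil fl, Finset.sum_singleton, Finset.sum_singleton]
    have hIi : i = fi := funext fun r => by rw [← hi r, hcast]
    have hIj : j = fj := funext fun r => by rw [← hj r, hcast]
    rw [hIi, hIj]
  | succ n hn IH =>
    rw [sum_snoc_filter hn _ fk]
    have hswap : ∀ k : Fin n → Bool, ∀ c : Bool,
        (∑ l ∈ Finset.univ.filter
            (fun l : Fin (n + 1) → Bool => ∀ r : Fin m, l (Fin.castLE (Nat.le_succ_of_le hn) r) = fl r),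
          Ln b1 b2 i j (Fin.snoc k c) l)
        = ∑ l ∈ Finset.univ.filter
            (fun l : Fin n → Bool => ∀ r : Fin m, l (Fin.castLE hn r) = fl r),
            ∑ d : Bool, Ln b1 b2 i j (Fin.snoc k c) (Fin.snoc l d) := by
      intro k c
      exact sum_snoc_filter hn _ fl _
    calc _ = ∑ k ∈ Finset.univ.filter
            (fun k : Fin n → Bool => ∀ r : Fin m, k (Fin.castLE hn r) = fk r),
          ∑ l ∈ Finset.univ.filter
            (fun l : Fin n → Bool => ∀ r : Fin m, l (Fin.castLE hn r) = fl r),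
          ∑ c : Bool, ∑ d : Bool, Ln b1 b2 i j (Fin.snoc k c) (Fin.snoc l d) := by
          apply Finset.sum_congr rfl
          intro k _
          rw [Finset.sum_congr rfl fun c _ => hswap k c]
          exact Finset.sum_comm
      _ = ∑ k ∈ Finset.univ.filter
            (fun k : Fin n → Bool => ∀ r : Fin m, k (Fin.castLE hn r) = fk r),
          ∑ l ∈ Finset.univ.filter
            (fun l : Fin n → Bool => ∀ r : Fin m, l (Fin.castLE hn r) = fl r),
          Ln b1 b2 (fun t => i t.castSucc) (fun t => j t.castSucc) k l := by
          apply Finset.sum_congr rfl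
          intro k _
          apply Finset.sum_congr rfl
          intro l _
          exact Ln_snoc_sum b1 b2 i j k l
      _ = Ln b1 b2 fi fj fk fl := by
          apply IH
          · intro r
            rw [← hi r]
            exact congrArg i (Fin.ext rfl)
          · intro r
            rw [← hj r]
            exact congrArg j (Fin.ext rfl)
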